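/- Let n ≥ 11 and 3 < d ≤ n−1 with n − d even. Then every maximal unrefinable partition of T_n − d has largest part equal to 2n − 5. -/

import Mathlib

/-- The n-th triangular number. -/
def T (n : ℕ) : ℕ := n * (n + 1) / 2

/-- A partition of `N` into distinct parts, represented as a finite set of
positive integers with at least two elements summing to `N`. -/
def DistinctPartition (N : ℕ) (S : Finset ℕ) : Prop :=
  (∀ x ∈ S, 0 < x) ∧ 2 ≤ S.card ∧ S.sum id = N

/-- The missing parts: integers in `{1, …, λ_t}` not appearing in the partition. -/
def Missing (S : Finset ℕ) : Finset ℕ := Finset.Icc 1 (S.sup id) \ S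

/-- No part is the sum of two distinct missing parts. -/
def Unrefinable (S : Finset ℕ) : Prop :=
  ∀ a ∈ Missing S, ∀ b ∈ Missing S, a ≠ b → a + b ∉ S

def UnrefinablePartition (N : ℕ) (S : Finset ℕ) : Prop :=
  DistinctPartition N S ∧ Unrefinable S

/-- A maximal unrefinable partition: its largest part is maximal among the
largest parts of all unrefinable partitions of `N`. -/
def MaximalUnrefinable (N : ℕ) (S : Finset ℕ) : Prop :=
  UnrefinablePartition N S ∧
    ∀ S' : Finset ℕ, UnrefinablePartition N S' → S'.sup id ≤ S.sup id

lemma T_succ (k : ℕ) : T (k + 1) = T k + (k + 1) := by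
  unfold T
  have h : (k + 1) * (k + 1 + 1) = k * (k + 1) + 2 * (k + 1) := by ring
  rw [h, Nat.add_mul_div_left _ _ (by norm_num : (0:ℕ) < 2)]

lemma sum_Icc_id (k : ℕ) : (Finset.Icc 1 k).sum id = T k := by
  induction k with
  | zero => simp [T]
  | succ k ih =>
    rw [Finset.sum_Icc_succ_top (by omega), ih, T_succ]
    rfl

lemma T_sub3 (n : ℕ) (hn : 3 ≤ n) : T n = T (n - 3) + (3 * n - 3) := by
  obtain ⟨p, rfl⟩ : ∃ p, n = p + 3 := ⟨n - 3, by omega⟩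
  have h1 : T (p + 3) = T (p + 2) + (p + 3) := by
    rw [show p + 3 = (p + 2) + 1 by ring]; exact T_succ (p + 2)
  have h2 : T (p + 2) = T (p + 1) + (p + 2) := by
    rw [show p + 2 = (p + 1) + 1 by ring]; exact T_succ (p + 1)
  have h3 := T_succ p
  have h4 : p + 3 - 3 = p := by omega
  rw [h4]
  omega

lemma T_sub2 (n : ℕ) (hn : 2 ≤ n) : T n = T (n - 2) + (2 * n - 1) := by
  obtain ⟨p, rfl⟩ : ∃ p, n = p + 2 := ⟨n - 2, by omega⟩
  have h1 : T (p + 2) = T (p + 1) + (p + 2) := by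
    rw [show p + 2 = (p + 1) + 1 by ring]; exact T_succ (p + 1)
  have h2 := T_succ p
  have h4 : p + 2 - 2 = p := by omega
  rw [h4]
  omega

/-- If `a` and `sup - a` can't both be missing, since they sum to the largest part. -/
lemma pair_cover {S : Finset ℕ} (href : Unrefinable S) (hmS : S.sup id ∈ S)
    {a k : ℕ} (hk : 2 * k < S.sup id) (ha1 : 1 ≤ a) (ha2 : a ≤ k) (haS : a ∉ S) :
    S.sup id - a ∈ S := by
  set m := S.sup id with hm
  by_contra hmaS
  have h1 : a ∈ Missing S := by
    simp only [Missing, Finset.mem_sdiff, Finset.mem_Icc]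
    exact ⟨⟨ha1, by omega⟩, haS⟩
  have h2 : m - a ∈ Missing S := by
    simp only [Missing, Finset.mem_sdiff, Finset.mem_Icc]
    exact ⟨⟨by omega, by omega⟩, hmaS⟩
  have h3 := href a h1 (m - a) h2 (by omega)
  have heq : a + (m - a) = m := by omega
  rw [heq] at h3
  exact h3 hmS

lemma sum_lower {N k : ℕ} {S : Finset ℕ} (hU : UnrefinablePartition N S)
    (hk : 2 * k < S.sup id) : S.sup id + T k ≤ N := by
  classical
  obtain ⟨⟨hpos, hcard, hsum⟩, href⟩ := hU
  set m := S.sup id with hm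
  have hne : S.Nonempty := Finset.card_pos.mp (by omega)
  obtain ⟨b, hbS, hbm⟩ := Finset.exists_mem_eq_sup S hne id
  have hmS : m ∈ S := by rw [hm, hbm]; exact hbS
  set I := Finset.Icc 1 k with hI
  set Lf := I.filter (fun a => a ∈ S) with hLf
  set Mf := I.filter (fun a => a ∉ S) with hMf
  set J := Mf.image (fun a => m - a) with hJ
  have hMf_mem : ∀ a ∈ Mf, 1 ≤ a ∧ a ≤ k ∧ a ∉ S := by
    intro a ha
    have := Finset.mem_filter.mp ha
    have h2 := Finset.mem_Icc.mp this.1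
    exact ⟨h2.1, h2.2, this.2⟩
  have hLf_mem : ∀ a ∈ Lf, 1 ≤ a ∧ a ≤ k ∧ a ∈ S := by
    intro a ha
    have := Finset.mem_filter.mp ha
    have h2 := Finset.mem_Icc.mp this.1
    exact ⟨h2.1, h2.2, this.2⟩
  have hJsum : J.sum id = Mf.sum (fun a => m - a) := by
    rw [hJ]
    apply Finset.sum_image
    intro a ha b hb hab
    have h1 := hMf_mem a ha
    have h2 := hMf_mem b hb
    simp only at hab
    omega
  have hJS : J ⊆ S := by
    intro x hx
    obtain ⟨a, ha, rfl⟩ := Finset.mem_image.mp hx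
    obtain ⟨h1, h2, h3⟩ := hMf_mem a ha
    exact pair_cover href hmS hk h1 h2 h3
  have hJ_mem : ∀ x ∈ J, k + 1 ≤ x ∧ x ≤ m - 1 := by
    intro x hx
    obtain ⟨a, ha, rfl⟩ := Finset.mem_image.mp hx
    obtain ⟨h1, h2, _⟩ := hMf_mem a ha
    omega
  have hd1 : Disjoint Lf J := by
    rw [Finset.disjoint_left]
    intro x hx hx'
    have := hLf_mem x hx
    have := hJ_mem x hx'
    omega
  have hd2 : Disjoint (Lf ∪ J) {m} := by
    rw [Finset.disjoint_right]
    intro x hx hx'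
    rw [Finset.mem_singleton] at hx
    subst hx
    rcases Finset.mem_union.mp hx' with h | h
    · have := hLf_mem m h; omega
    · have := hJ_mem m h; omega
  have hsub : Lf ∪ J ∪ {m} ⊆ S := by
    intro x hx
    rcases Finset.mem_union.mp hx with h | h
    · rcases Finset.mem_union.mp h with h' | h'
      · exact (hLf_mem x h').2.2
      · exact hJS h'
    · rw [Finset.mem_singleton] at h; subst h; exact hmS
  have h1 : (Lf ∪ J ∪ {m}).sum id ≤ S.sum id := Finset.sum_le_sum_of_subset hsub
  have h2 : (Lf ∪ J ∪ {m}).sum id = Lf.sum id + J.sum id + m := by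
    rw [Finset.sum_union hd2, Finset.sum_union hd1, Finset.sum_singleton]
    rfl
  have h3 : I.sum id = Lf.sum id + Mf.sum id := by
    rw [hLf, hMf]
    exact (Finset.sum_filter_add_sum_filter_not I (fun a => a ∈ S) id).symm
  have h4 : Mf.sum id ≤ Mf.sum (fun a => m - a) := by
    apply Finset.sum_le_sum
    intro a ha
    have := hMf_mem a ha
    simp only [id]
    omega
  have h5 := sum_Icc_id k
  rw [← hI] at h5
  omega

/-- The parity obstruction: the largest part cannot be `2n - 4`. -/
lemma no_sup_even (n d : ℕ) (hn : 11 ≤ n) (hd1 : 3 < d) (hd2 : d ≤ n - 1)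
    (hpar : Even (n - d)) {S : Finset ℕ} (hU : UnrefinablePartition (T n - d) S)
    (hms : S.sup id = 2 * n - 4) : False := by
  classical
  obtain ⟨⟨hpos, hcard, hsum⟩, href⟩ := hU
  have hne : S.Nonempty := Finset.card_pos.mp (by omega)
  obtain ⟨b, hbS, hbm⟩ := Finset.exists_mem_eq_sup S hne id
  have hmS : 2 * n - 4 ∈ S := by rw [← hms, hbm]; exact hbS
  have hmS' : S.sup id ∈ S := by rw [hms]; exact hmS
  have hk : 2 * (n - 3) < S.sup id := by omega
  set I := Finset.Icc 1 (n - 3) with hI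
  set Lf := I.filter (fun a => a ∈ S) with hLf
  set Mf := I.filter (fun a => a ∉ S) with hMf
  set J := Mf.image (fun a => 2 * n - 4 - a) with hJ
  have hMf_mem : ∀ a ∈ Mf, 1 ≤ a ∧ a ≤ n - 3 ∧ a ∉ S := by
    intro a ha
    have := Finset.mem_filter.mp ha
    have h2 := Finset.mem_Icc.mp this.1
    exact ⟨h2.1, h2.2, this.2⟩
  have hLf_mem : ∀ a ∈ Lf, 1 ≤ a ∧ a ≤ n - 3 ∧ a ∈ S := by
    intro a ha
    have := Finset.mem_filter.mp ha
    have h2 := Finset.mem_Icc.mp this.1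
    exact ⟨h2.1, h2.2, this.2⟩
  have hJsum : J.sum id = Mf.sum (fun a => 2 * n - 4 - a) := by
    rw [hJ]
    apply Finset.sum_image
    intro a ha b hb hab
    have h1 := hMf_mem a ha
    have h2 := hMf_mem b hb
    simp only at hab
    omega
  have hJS : J ⊆ S := by
    intro x hx
    obtain ⟨a, ha, rfl⟩ := Finset.mem_image.mp hx
    obtain ⟨h1, h2, h3⟩ := hMf_mem a ha
    have := pair_cover href hmS' hk h1 h2 h3
    rwa [hms] at this
  have hJ_mem : ∀ x ∈ J, n - 1 ≤ x ∧ x ≤ 2 * n - 5 := by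
    intro x hx
    obtain ⟨a, ha, rfl⟩ := Finset.mem_image.mp hx
    obtain ⟨h1, h2, _⟩ := hMf_mem a ha
    omega
  have hd1' : Disjoint Lf J := by
    rw [Finset.disjoint_left]
    intro x hx hx'
    have := hLf_mem x hx
    have := hJ_mem x hx'
    omega
  have hTn3 := T_sub3 n (by omega)
  have hIccsum := sum_Icc_id (n - 3)
  rw [← hI] at hIccsum
  have hsplit : I.sum id = Lf.sum id + Mf.sum id := by
    rw [hLf, hMf]
    exact (Finset.sum_filter_add_sum_filter_not I (fun a => a ∈ S) id).symm
  -- generic lower bound with an extra element x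
  have base : ∀ x, x ∈ S → x ∉ Lf → x ∉ J → x ≠ 2 * n - 4 →
      T (n - 3) + (2 * n - 4) + x ≤ T n - d := by
    intro x hxS hxL hxJ hxm
    have hdisj1 : Disjoint Lf J := hd1'
    have hdisj2 : Disjoint (Lf ∪ J) ({x, 2 * n - 4} : Finset ℕ) := by
      rw [Finset.disjoint_right]
      intro y hy hy'
      rcases Finset.mem_insert.mp hy with rfl | hy2
      · exact absurd hy' (by
          intro h
          rcases Finset.mem_union.mp h with h | h
          · exact hxL h
          · exact hxJ h)
      · rw [Finset.mem_singleton] at hy2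
        subst hy2
        rcases Finset.mem_union.mp hy' with h | h
        · have := hLf_mem _ h; omega
        · have := hJ_mem _ h; omega
    have hsub : Lf ∪ J ∪ ({x, 2 * n - 4} : Finset ℕ) ⊆ S := by
      intro y hy
      rcases Finset.mem_union.mp hy with h | h
      · rcases Finset.mem_union.mp h with h' | h'
        · exact (hLf_mem y h').2.2
        · exact hJS h'
      · rcases Finset.mem_insert.mp h with rfl | h2
        · exact hxS
        · rw [Finset.mem_singleton] at h2; subst h2; exact hmS
    have h1 : (Lf ∪ J ∪ ({x, 2 * n - 4} : Finset ℕ)).sum id ≤ S.sum id :=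
      Finset.sum_le_sum_of_subset hsub
    have h2 : (Lf ∪ J ∪ ({x, 2 * n - 4} : Finset ℕ)).sum id
        = Lf.sum id + J.sum id + (x + (2 * n - 4)) := by
      rw [Finset.sum_union hdisj2, Finset.sum_union hdisj1, Finset.sum_pair hxm]
      rfl
    have h4 : Mf.sum id ≤ Mf.sum (fun a => 2 * n - 4 - a) := by
      apply Finset.sum_le_sum
      intro a ha
      have := hMf_mem a ha
      simp only [id]
      omega
    omega
  -- n - 2 is not a part
  have hn2 : n - 2 ∉ S := by
    intro h
    have := base (n - 2) h
      (by intro hmem; have := hLf_mem _ hmem; omega)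
      (by intro hmem; have := hJ_mem _ hmem; omega)
      (by omega)
    omega
  -- no pair {a, 2n-4-a} fully contained in S
  have hnoboth : ∀ a, 1 ≤ a → a ≤ n - 3 → a ∈ S → 2 * n - 4 - a ∈ S → False := by
    intro a ha1 ha2 haS haS'
    have hnotJ : 2 * n - 4 - a ∉ J := by
      intro hmem
      obtain ⟨a', ha', heq⟩ := Finset.mem_image.mp hmem
      obtain ⟨h1, h2, h3⟩ := hMf_mem a' ha'
      have : a' = a := by omega
      subst this
      exact h3 haS
    have := base (2 * n - 4 - a) haS'
      (by intro hmem; have := hLf_mem _ hmem; omega)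
      hnotJ (by omega)
    omega
  -- exact structure of S
  have hexact : S = Lf ∪ J ∪ {2 * n - 4} := by
    apply Finset.Subset.antisymm
    · intro x hxS
      have hx1 : 0 < x := hpos x hxS
      have hxm : x ≤ 2 * n - 4 := by
        have := Finset.le_sup (f := id) hxS
        rw [hms] at this
        exact this
      by_cases hc1 : x ≤ n - 3
      · exact Finset.mem_union.mpr (Or.inl (Finset.mem_union.mpr (Or.inl
          (Finset.mem_filter.mpr ⟨Finset.mem_Icc.mpr ⟨by omega, hc1⟩, hxS⟩))))
      · by_cases hc2 : x = n - 2
        · exact absurd (hc2 ▸ hxS) hn2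
        · by_cases hc3 : x = 2 * n - 4
          · exact Finset.mem_union.mpr (Or.inr (by rw [Finset.mem_singleton]; exact hc3))
          · -- n - 1 ≤ x ≤ 2n - 5
            have hr1 : n - 1 ≤ x := by omega
            have hr2 : x ≤ 2 * n - 5 := by omega
            have haM : 2 * n - 4 - x ∈ Mf := by
              apply Finset.mem_filter.mpr
              refine ⟨Finset.mem_Icc.mpr ⟨by omega, by omega⟩, ?_⟩
              intro hS'
              exact hnoboth (2 * n - 4 - x) (by omega) (by omega) hS'
                (by have : 2 * n - 4 - (2 * n - 4 - x) = x := by omega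
                    rw [this]; exact hxS)
            refine Finset.mem_union.mpr (Or.inl (Finset.mem_union.mpr (Or.inr ?_)))
            apply Finset.mem_image.mpr
            exact ⟨2 * n - 4 - x, haM, by omega⟩
    · intro x hx
      rcases Finset.mem_union.mp hx with h | h
      · rcases Finset.mem_union.mp h with h' | h'
        · exact (hLf_mem x h').2.2
        · exact hJS h'
      · rw [Finset.mem_singleton] at h; subst h; exact hmS
  have hd2' : Disjoint (Lf ∪ J) ({2 * n - 4} : Finset ℕ) := by
    rw [Finset.disjoint_right]
    intro y hy hy'
    rw [Finset.mem_singleton] at hy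
    subst hy
    rcases Finset.mem_union.mp hy' with h | h
    · have := hLf_mem _ h; omega
    · have := hJ_mem _ h; omega
  have htotal : T n - d = Lf.sum id + J.sum id + (2 * n - 4) := by
    rw [← hsum, hexact, Finset.sum_union hd2', Finset.sum_union hd1',
      Finset.sum_singleton]
    rfl
  -- decompose J.sum
  have hJsum2 : J.sum id = Mf.sum id + 2 * Mf.sum (fun a => n - 2 - a) := by
    rw [hJsum]
    have : Mf.sum (fun a => 2 * n - 4 - a) = Mf.sum (fun a => a + 2 * (n - 2 - a)) := by
      apply Finset.sum_congr rfl
      intro a ha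
      have := hMf_mem a ha
      omega
    rw [this, Finset.sum_add_distrib, Finset.mul_sum]
    congr 1
  obtain ⟨s, hs⟩ := hpar
  omega

lemma upper (n d : ℕ) (hn : 11 ≤ n) (hd1 : 3 < d) (hd2 : d ≤ n - 1)
    (hpar : Even (n - d)) {S : Finset ℕ} (hU : UnrefinablePartition (T n - d) S) :
    S.sup id ≤ 2 * n - 5 := by
  by_contra h
  push_neg at h
  rcases eq_or_lt_of_le (show 2 * n - 4 ≤ S.sup id by omega) with heq | hlt
  · exact no_sup_even n d hn hd1 hd2 hpar hU heq.symm
  · have h2 : 2 * (n - 2) < S.sup id := by omega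
    have h3 := sum_lower hU h2
    have h4 := T_sub2 n (by omega)
    have h5 : T n = T (n - 3) + (3 * n - 3) := T_sub3 n (by omega)
    omega

lemma case_arith (n a₁ a₂ c b₁ b₂ x : ℕ) (hn : 11 ≤ n)
    (hb1 : n - 3 < 2 * a₁) (h12 : a₁ < a₂) (ha2 : a₂ ≤ n - 3)
    (hc : c = 2 * n - 5) (hb₁ : b₁ = c - a₁) (hb₂ : b₂ = c - a₂)
    (hx1 : 1 ≤ x) (hx2 : x ≤ c)
    (hxn : ¬((1 ≤ x ∧ x ≤ n - 3 ∧ x ≠ a₁ ∧ x ≠ a₂) ∨ x = b₂ ∨ x = b₁ ∨ x = c)) :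
    x = a₁ ∨ x = a₂ ∨ (n - 2 ≤ x ∧ x ≤ 2 * n - 6 ∧ x ≠ b₁ ∧ x ≠ b₂) := by
  push_neg at hxn; omega

lemma cons_arith (n d a₁ a₂ c b₁ b₂ x y : ℕ) (hn : 11 ≤ n) (hd1 : 3 < d) (hd2 : d ≤ n - 2)
    (hb1 : n - 3 < 2 * a₁) (h12 : a₁ < a₂) (ha2 : a₂ ≤ n - 3)
    (hsab : 2 * (a₁ + a₂) + 12 = 3 * n + d)
    (hx1 : 2 * a₁ + d ≠ n + 2) (hx2 : 2 * a₂ + d ≠ n + 2)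
    (hc : c = 2 * n - 5) (hb₁ : b₁ = c - a₁) (hb₂ : b₂ = c - a₂)
    (hxy : x ≠ y)
    (hxcase : x = a₁ ∨ x = a₂ ∨ (n - 2 ≤ x ∧ x ≤ 2 * n - 6 ∧ x ≠ b₁ ∧ x ≠ b₂))
    (hycase : y = a₁ ∨ y = a₂ ∨ (n - 2 ≤ y ∧ y ≤ 2 * n - 6 ∧ y ≠ b₁ ∧ y ≠ b₂)) :
    ¬((1 ≤ x + y ∧ x + y ≤ n - 3 ∧ x + y ≠ a₁ ∧ x + y ≠ a₂) ∨ x + y = b₂ ∨ x + y = b₁ ∨ x + y = c) := by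
  rcases hxcase with rfl | rfl | ⟨hxx1, hxx2, hxx3, hxx4⟩ <;>
    rcases hycase with h | h | ⟨hyy1, hyy2, hyy3, hyy4⟩ <;>
    omega

set_option maxHeartbeats 1000000 in
lemma construction (n d a₁ a₂ : ℕ) (hn : 11 ≤ n) (hd1 : 3 < d) (hd2 : d ≤ n - 2)
    (hb1 : n - 3 < 2 * a₁) (h12 : a₁ < a₂) (ha2 : a₂ ≤ n - 3)
    (hsab : 2 * (a₁ + a₂) + 12 = 3 * n + d)
    (hx1 : 2 * a₁ + d ≠ n + 2) (hx2 : 2 * a₂ + d ≠ n + 2) :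
    ∃ S : Finset ℕ, UnrefinablePartition (T n - d) S ∧ S.sup id = 2 * n - 5 := by
  classical
  set c : ℕ := 2 * n - 5 with hc
  set b₁ : ℕ := c - a₁ with hb₁
  set b₂ : ℕ := c - a₂ with hb₂
  set S : Finset ℕ := (Finset.Icc 1 (n - 3) \ {a₁, a₂}) ∪ ({b₂, b₁, c} : Finset ℕ) with hS
  clear_value S
  clear_value b₂
  clear_value b₁
  clear_value c
  have ha1l : 5 ≤ a₁ := by omega
  have hmem : ∀ x, x ∈ S ↔
      ((1 ≤ x ∧ x ≤ n - 3 ∧ x ≠ a₁ ∧ x ≠ a₂) ∨ x = b₂ ∨ x = b₁ ∨ x = c) := by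
    intro x
    simp only [hS, Finset.mem_union, Finset.mem_sdiff, Finset.mem_Icc,
      Finset.mem_insert, Finset.mem_singleton]
    tauto
  have hcS : c ∈ S := by rw [hmem]; tauto
  have hb₁S : b₁ ∈ S := by rw [hmem]; tauto
  have hsup : S.sup id = c := by
    apply le_antisymm
    · apply Finset.sup_le
      intro x hx
      rw [hmem] at hx
      simp only [id]
      omega
    · exact Finset.le_sup (f := id) hcS
  have hpos : ∀ x ∈ S, 0 < x := by
    intro x hx
    rw [hmem] at hx
    omega
  have hcard : 2 ≤ S.card := by
    have : 1 < S.card := Finset.one_lt_card.mpr ⟨b₁, hb₁S, c, hcS, by omega⟩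
    omega
  have hpairsub : ({a₁, a₂} : Finset ℕ) ⊆ Finset.Icc 1 (n - 3) := by
    intro x hx
    rcases Finset.mem_insert.mp hx with rfl | hx2
    · exact Finset.mem_Icc.mpr ⟨by omega, by omega⟩
    · rw [Finset.mem_singleton] at hx2; subst hx2
      exact Finset.mem_Icc.mpr ⟨by omega, by omega⟩
  have hsd : (Finset.Icc 1 (n - 3) \ {a₁, a₂}).sum id + ({a₁, a₂} : Finset ℕ).sum id
      = (Finset.Icc 1 (n - 3)).sum id := Finset.sum_sdiff hpairsub
  have hpairsum : ({a₁, a₂} : Finset ℕ).sum id = a₁ + a₂ := Finset.sum_pair (by omega)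
  have htrip : ({b₂, b₁, c} : Finset ℕ).sum id = b₂ + (b₁ + c) := by
    rw [Finset.sum_insert (by
      simp only [Finset.mem_insert, Finset.mem_singleton]
      omega), Finset.sum_pair (by omega)]
    rfl
  have hdisj : Disjoint (Finset.Icc 1 (n - 3) \ {a₁, a₂}) ({b₂, b₁, c} : Finset ℕ) := by
    rw [Finset.disjoint_left]
    intro x hx hx'
    have h1 := Finset.mem_Icc.mp (Finset.mem_sdiff.mp hx).1
    simp only [Finset.mem_insert, Finset.mem_singleton] at hx'
    omega
  have hIccsum := sum_Icc_id (n - 3)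
  have hTn3 := T_sub3 n (by omega)
  have hsum : S.sum id = T n - d := by
    have h0 : S.sum id = (Finset.Icc 1 (n - 3) \ {a₁, a₂}).sum id
        + ({b₂, b₁, c} : Finset ℕ).sum id := by
      rw [hS]; exact Finset.sum_union hdisj
    omega
  have hunref : Unrefinable S := by
    intro x hx y hy hxy
    have hx' : (1 ≤ x ∧ x ≤ c) ∧ x ∉ S := by
      simpa only [Missing, hsup, Finset.mem_sdiff, Finset.mem_Icc] using hx
    have hy' : (1 ≤ y ∧ y ≤ c) ∧ y ∉ S := by
      simpa only [Missing, hsup, Finset.mem_sdiff, Finset.mem_Icc] using hy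
    have hxn : ¬((1 ≤ x ∧ x ≤ n - 3 ∧ x ≠ a₁ ∧ x ≠ a₂) ∨ x = b₂ ∨ x = b₁ ∨ x = c) := by
      rw [← hmem]; exact hx'.2
    have hyn : ¬((1 ≤ y ∧ y ≤ n - 3 ∧ y ≠ a₁ ∧ y ≠ a₂) ∨ y = b₂ ∨ y = b₁ ∨ y = c) := by
      rw [← hmem]; exact hy'.2
    have hxcase := case_arith n a₁ a₂ c b₁ b₂ x hn hb1 h12 ha2 hc hb₁ hb₂
      hx'.1.1 hx'.1.2 hxn
    have hycase := case_arith n a₁ a₂ c b₁ b₂ y hn hb1 h12 ha2 hc hb₁ hb₂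
      hy'.1.1 hy'.1.2 hyn
    rw [hmem]
    exact cons_arith n d a₁ a₂ c b₁ b₂ x y hn hd1 hd2 hb1 h12 ha2 hsab hx1 hx2
      hc hb₁ hb₂ hxy hxcase hycase
  exact ⟨S, ⟨⟨hpos, hcard, hsum⟩, hunref⟩, hsup⟩

theorem max_part_n_sub_d_even (n d : ℕ) (hn : 11 ≤ n) (hd1 : 3 < d) (hd2 : d ≤ n - 1)
    (hpar : Even (n - d)) (S : Finset ℕ) (h : MaximalUnrefinable (T n - d) S) :
    S.sup id = 2 * n - 5 := by
  obtain ⟨hU, hmax⟩ := h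
  have hupper := upper n d hn hd1 hd2 hpar hU
  obtain ⟨s, hs⟩ := hpar
  have hd2' : d ≤ n - 2 := by omega
  have hcons : ∃ S' : Finset ℕ, UnrefinablePartition (T n - d) S' ∧ S'.sup id = 2 * n - 5 := by
    by_cases hd4 : d = 4
    · subst hd4
      exact construction n 4 (s + 2) (n - 4) hn (by omega) hd2'
        (by omega) (by omega) (by omega) (by omega) (by omega) (by omega)
    · exact construction n d (s + d - 3) (n - 3) hn hd1 hd2'
        (by omega) (by omega) (by omega) (by omega) (by omega) (by omega)
  obtain ⟨S', hU', hsup'⟩ := hcons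
  have hge := hmax S' hU'
  omega
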